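/- Let k > 1, α₀ > 0 and ν ∈ ℝ, and set ν′ = ν − (k−1)/(2·α₀·tanh α₀). If ν′ > 0, then for every x ≥ α₀ one has −ν′·tanh(x − α₀) > −ν·tanh(x) + (k−1)/(2x); equivalently, ν·tanh(x) − (k−1)/(2x) > ν′·tanh(x − α₀). -/

import Mathlib

open Real

lemma tanh_lt_tanh' {a b : ℝ} (h : a < b) : Real.tanh a < Real.tanh b := by
  rw [Real.tanh_eq_sinh_div_cosh, Real.tanh_eq_sinh_div_cosh,
    div_lt_div_iff₀ (Real.cosh_pos a) (Real.cosh_pos b)]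
  have hs : 0 < Real.sinh (b - a) := Real.sinh_pos_iff.mpr (sub_pos.mpr h)
  rw [Real.sinh_sub] at hs
  nlinarith

/-- Drift comparison: with `ν′ = ν − (k−1)/(2α₀ tanh α₀) > 0`, for every `x ≥ α₀` one has
`−ν′ tanh(x − α₀) > −ν tanh x + (k−1)/(2x)`. -/
theorem drift_comparison (k α₀ ν ν' : ℝ) (hk : 1 < k) (hα : 0 < α₀)
    (hν' : ν' = ν - (k - 1) / (2 * α₀ * Real.tanh α₀)) (hν'pos : 0 < ν') :
    ∀ x ≥ α₀,
      -ν' * Real.tanh (x - α₀) > -ν * Real.tanh x + (k - 1) / (2 * x) ∧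
      ν * Real.tanh x - (k - 1) / (2 * x) > ν' * Real.tanh (x - α₀) := by
  intro x hx
  have hx0 : 0 < x := lt_of_lt_of_le hα hx
  have ht0 : 0 < Real.tanh α₀ := by
    have := tanh_lt_tanh' (show (0:ℝ) < α₀ from hα)
    simpa [Real.tanh_zero] using this
  have htx : Real.tanh α₀ ≤ Real.tanh x := by
    rcases eq_or_lt_of_le hx with h | h
    · rw [h]
    · exact le_of_lt (tanh_lt_tanh' h)
  have hts : Real.tanh (x - α₀) < Real.tanh x := tanh_lt_tanh' (by linarith)
  set c : ℝ := (k - 1) / (2 * α₀ * Real.tanh α₀) with hc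
  have hceq : c * Real.tanh α₀ = (k - 1) / (2 * α₀) := by
    field_simp [hc]
    rw [hc]
    field_simp
  have hcpos : 0 < c := by
    apply div_pos (by linarith) (by positivity)
  -- c * tanh x ≥ (k-1)/(2x)
  have h1 : (k - 1) / (2 * x) ≤ c * Real.tanh x := by
    calc (k - 1) / (2 * x) ≤ (k - 1) / (2 * α₀) := by
          apply div_le_div_of_nonneg_left (by linarith) (by positivity) (by linarith)
      _ = c * Real.tanh α₀ := hceq.symm
      _ ≤ c * Real.tanh x := by nlinarith
  have h2 : ν' * Real.tanh (x - α₀) < ν' * Real.tanh x :=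
    mul_lt_mul_of_pos_left hts hν'pos
  have hν : ν = ν' + c := by rw [hν']; ring
  constructor
  · rw [hν]; nlinarith
  · rw [hν]; nlinarith
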